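/- Let κ ≥ 0 and suppose ũ₁, ũ₀ : [0,T] → ℝ are continuous with ũ₁(t) ≤ κ(1+t) and ũ₀(t) ≤ κ(1+t) for all t, and q₁⁰ ≤ κ. Then the solution of q₁' = (1/ε)(ũ₁ − q₁) + K₁(ũ₀ − q₁), q₁(0) = q₁⁰, satisfies q₁(t) ≤ κ(1+t) for all t ∈ [0,T]. -/

import Mathlib

theorem epithelium_linear_growth_bound (ε K₁ T κ : ℝ) (hε : 0 < ε) (hK : 0 < K₁)
    (hT : 0 < T) (hκ : 0 ≤ κ)
    (u1 u0 : ℝ → ℝ) (hu1 : Continuous u1) (hu0 : Continuous u0)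
    (hb1 : ∀ t ∈ Set.Icc (0:ℝ) T, u1 t ≤ κ * (1 + t))
    (hb0 : ∀ t ∈ Set.Icc (0:ℝ) T, u0 t ≤ κ * (1 + t))
    (q1 : ℝ → ℝ) (hq0 : q1 0 ≤ κ)
    (hq : ∀ t ∈ Set.Icc (0:ℝ) T,
      HasDerivAt q1 ((1 / ε) * (u1 t - q1 t) + K₁ * (u0 t - q1 t)) t) :
    ∀ t ∈ Set.Icc (0:ℝ) T, q1 t ≤ κ * (1 + t) := by
  set c : ℝ := 1 / ε + K₁ with hc
  set f : ℝ → ℝ := fun t => Real.exp (c * t) * (q1 t - κ * (1 + t)) with hf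
  have hderiv : ∀ t ∈ Set.Icc (0:ℝ) T,
      HasDerivAt f (Real.exp (c * t) *
        ((1 / ε) * (u1 t - κ * (1 + t)) + K₁ * (u0 t - κ * (1 + t)) - κ)) t := by
    intro t ht
    have h1 : HasDerivAt (fun t => Real.exp (c * t)) (c * Real.exp (c * t)) t := by
      simpa [mul_comm] using ((hasDerivAt_id t).const_mul c).exp
    have h2 : HasDerivAt (fun t => q1 t - κ * (1 + t))
        ((1 / ε) * (u1 t - q1 t) + K₁ * (u0 t - q1 t) - κ) t := by
      have : HasDerivAt (fun t : ℝ => κ * (1 + t)) κ t := by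
        simpa using ((hasDerivAt_id t).const_add (1:ℝ)).const_mul κ
      exact (hq t ht).sub this
    have := h1.mul h2
    refine this.congr_deriv ?_
    rw [hc]
    ring
  have hcont : ContinuousOn f (Set.Icc 0 T) := fun t ht =>
    (hderiv t ht).continuousAt.continuousWithinAt
  have hanti : AntitoneOn f (Set.Icc 0 T) := by
    apply antitoneOn_of_deriv_nonpos (convex_Icc 0 T) hcont
    · intro t ht
      rw [interior_Icc] at ht
      exact (hderiv t (Set.mem_Icc_of_Ioo ht)).differentiableAt.differentiableWithinAt
    · intro t ht
      rw [interior_Icc] at ht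
      have ht' := Set.mem_Icc_of_Ioo ht
      rw [(hderiv t ht').deriv]
      have e1 : u1 t - κ * (1 + t) ≤ 0 := by linarith [hb1 t ht']
      have e0 : u0 t - κ * (1 + t) ≤ 0 := by linarith [hb0 t ht']
      have : (1 / ε) * (u1 t - κ * (1 + t)) + K₁ * (u0 t - κ * (1 + t)) - κ ≤ 0 := by
        have h1 : (1 / ε) * (u1 t - κ * (1 + t)) ≤ 0 :=
          mul_nonpos_of_nonneg_of_nonpos (by positivity) e1
        have h0 : K₁ * (u0 t - κ * (1 + t)) ≤ 0 :=
          mul_nonpos_of_nonneg_of_nonpos hK.le e0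
        linarith
      exact mul_nonpos_of_nonneg_of_nonpos (Real.exp_pos _).le this
  intro t ht
  have h0mem : (0:ℝ) ∈ Set.Icc (0:ℝ) T := ⟨le_refl 0, hT.le⟩
  have := hanti h0mem ht ht.1
  have hf0 : f 0 ≤ 0 := by
    simp only [hf, mul_zero, Real.exp_zero, one_mul, add_zero]
    linarith
  have hft : f t ≤ 0 := le_trans this hf0
  have hexp : 0 < Real.exp (c * t) := Real.exp_pos _
  have hft' : Real.exp (c * t) * (q1 t - κ * (1 + t)) ≤ 0 := hft
  by_contra h
  push_neg at h
  nlinarith [mul_pos hexp (by linarith : (0:ℝ) < q1 t - κ * (1 + t))]
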